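/- Let F₃ := (id⊗S_B⁻¹)(E) ∈ B⊗B, viewed in A⊗A. Then F₃·(x⊗1) = (1⊗x)·F₃ for all x ∈ B (so the map a⊗b ↦ (1⊗b)F₃(a⊗1) satisfies (1⊗b)F₃(xa⊗1) = (1⊗bx)F₃(a⊗1) and descends to the balanced quotient A⊗^sA := (A⊗A)/J^s), and for all a, b ∈ A the element (1⊗b)F₃(a⊗1) − a⊗b lies in J^s := span_ℂ{xa'⊗b' − a'⊗b'x : x ∈ B, a', b' ∈ A}. -/

import Mathlib

open scoped TensorProduct

set_option synthInstance.maxHeartbeats 1000000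
set_option maxHeartbeats 1000000

/-- The canonical inclusion `B ⊗ C → A ⊗ A` for subalgebras `B, C ⊆ A`. -/
noncomputable def incl {A : Type*} [Ring A] [Algebra ℂ A] (B C : Subalgebra ℂ A) :
    (↥B ⊗[ℂ] ↥C) →ₗ[ℂ] (A ⊗[ℂ] A) :=
  TensorProduct.map B.val.toLinearMap C.val.toLinearMap

/-- The linear map `μ_{S_B} : B ⊗ C → C`, `b ⊗ c ↦ S_B(b)·c`. -/
noncomputable def muSB {A : Type*} [Ring A] [Algebra ℂ A] {B C : Subalgebra ℂ A}
    (SB : ↥B ≃ₗ[ℂ] ↥C) : (↥B ⊗[ℂ] ↥C) →ₗ[ℂ] ↥C :=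
  TensorProduct.lift (LinearMap.mul ℂ ↥C) ∘ₗ TensorProduct.map SB.toLinearMap LinearMap.id

/-- The linear map `μ_{S_C} : B ⊗ C → B`, `b ⊗ c ↦ b·S_C(c)`. -/
noncomputable def muSC {A : Type*} [Ring A] [Algebra ℂ A] {B C : Subalgebra ℂ A}
    (SC : ↥C ≃ₗ[ℂ] ↥B) : (↥B ⊗[ℂ] ↥C) →ₗ[ℂ] ↥B :=
  TensorProduct.lift (LinearMap.mul ℂ ↥B) ∘ₗ TensorProduct.map LinearMap.id SC.toLinearMap

/-- `F₃ := (id⊗S_B⁻¹)(E) ∈ B⊗B` viewed in `A⊗A`. -/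
noncomputable def F3 {A : Type*} [Ring A] [Algebra ℂ A] {B C : Subalgebra ℂ A}
    (SB : ↥B ≃ₗ[ℂ] ↥C) (E : ↥B ⊗[ℂ] ↥C) : A ⊗[ℂ] A :=
  incl B B (TensorProduct.map LinearMap.id SB.symm.toLinearMap E)

/-- `F₃·(x⊗1) = (1⊗x)·F₃` for all `x ∈ B`, and for all `a, b ∈ A` the element
`(1⊗b)F₃(a⊗1) − a⊗b` lies in the balancing subspace `Jˢ`. -/
theorem stmt14 {A : Type*} [Ring A] [Algebra ℂ A] (B C : Subalgebra ℂ A)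
    (hcomm : ∀ (x : ↥B) (y : ↥C), (x : A) * (y : A) = (y : A) * (x : A))
    (SB : ↥B ≃ₗ[ℂ] ↥C) (hSBmul : ∀ x x' : ↥B, SB (x * x') = SB x' * SB x)
    (hSBone : SB 1 = 1)
    (SC : ↥C ≃ₗ[ℂ] ↥B) (hSCmul : ∀ y y' : ↥C, SC (y * y') = SC y' * SC y)
    (hSCone : SC 1 = 1)
    (E : ↥B ⊗[ℂ] ↥C) (hEidem : E * E = E)
    (hE1 : ∀ x : ↥B, E * (x ⊗ₜ[ℂ] (1 : ↥C)) = E * ((1 : ↥B) ⊗ₜ[ℂ] SB x))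
    (hE2 : ∀ y : ↥C, ((1 : ↥B) ⊗ₜ[ℂ] y) * E = (SC y ⊗ₜ[ℂ] (1 : ↥C)) * E)
    (hn1 : muSB SB E = 1) (hn2 : muSC SC E = 1) :
    (∀ x : ↥B,
      F3 SB E * ((x : A) ⊗ₜ[ℂ] (1 : A)) = ((1 : A) ⊗ₜ[ℂ] (x : A)) * F3 SB E) ∧
    (∀ a b : A,
      ((1 : A) ⊗ₜ[ℂ] b) * F3 SB E * (a ⊗ₜ[ℂ] (1 : A)) - a ⊗ₜ[ℂ] b ∈
        Submodule.span ℂ {z : A ⊗[ℂ] A |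
          ∃ (x : ↥B) (a' b' : A),
            z = ((x : A) * a') ⊗ₜ[ℂ] b' - a' ⊗ₜ[ℂ] (b' * (x : A))}) := by

  classical
  -- `SB.symm` is anti-multiplicative
  have hsymm_anti : ∀ (y : ↥C) (x : ↥B), SB.symm (y * SB x) = x * SB.symm y := by
    intro y x
    apply SB.injective
    rw [LinearEquiv.apply_symm_apply, hSBmul, LinearEquiv.apply_symm_apply]
  -- `incl` is multiplicative
  have hincl_eq : incl B B = (Algebra.TensorProduct.map B.val B.val).toLinearMap := by
    apply TensorProduct.ext'
    intro p q
    rfl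
  have hincl : ∀ s t : ↥B ⊗[ℂ] ↥B, incl B B (s * t) = incl B B s * incl B B t := by
    intro s t
    rw [hincl_eq]
    simp only [AlgHom.toLinearMap_apply]
    exact map_mul (Algebra.TensorProduct.map B.val B.val) s t
  have hMR : ∀ (t : ↥B ⊗[ℂ] ↥C) (x : ↥B),
      TensorProduct.map LinearMap.id SB.symm.toLinearMap (t * (x ⊗ₜ[ℂ] (1 : ↥C))) =
      TensorProduct.map LinearMap.id SB.symm.toLinearMap t * (x ⊗ₜ[ℂ] (1 : ↥B)) := by
    intro t x
    induction t using TensorProduct.induction_on with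
    | zero => simp
    | tmul e f => simp [Algebra.TensorProduct.tmul_mul_tmul]
    | add s t hs ht => simp [add_mul, hs, ht]
  have hML : ∀ (t : ↥B ⊗[ℂ] ↥C) (x : ↥B),
      TensorProduct.map LinearMap.id SB.symm.toLinearMap (t * ((1 : ↥B) ⊗ₜ[ℂ] SB x)) =
      ((1 : ↥B) ⊗ₜ[ℂ] x) * TensorProduct.map LinearMap.id SB.symm.toLinearMap t := by
    intro t x
    induction t using TensorProduct.induction_on with
    | zero => simp
    | tmul e f => simp [Algebra.TensorProduct.tmul_mul_tmul, hsymm_anti]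
    | add s t hs ht => simp [add_mul, mul_add, hs, ht]
  constructor
  · intro x
    have h1 : ((x : A) ⊗ₜ[ℂ] (1 : A)) = incl B B (x ⊗ₜ[ℂ] (1 : ↥B)) := by simp [incl]
    have h2 : ((1 : A) ⊗ₜ[ℂ] (x : A)) = incl B B ((1 : ↥B) ⊗ₜ[ℂ] x) := by simp [incl]
    rw [F3, h1, h2, ← hincl, ← hMR, hE1, hML, hincl]
  · -- the auxiliary "pairing" map
    intro a b
    set chi : (↥B ⊗[ℂ] ↥C) →ₗ[ℂ] ↥B :=
      TensorProduct.lift ((LinearMap.mul ℂ ↥B).flip) ∘ₗ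
        TensorProduct.map LinearMap.id SB.symm.toLinearMap with hchidef
    have hchi_tmul : ∀ (e : ↥B) (f : ↥C), chi (e ⊗ₜ[ℂ] f) = SB.symm f * e := by
      intro e f; rfl
    have hchiE : chi E = 1 := by
      apply SB.injective
      have hmu : ∀ t : ↥B ⊗[ℂ] ↥C, SB (chi t) = muSB SB t := by
        intro t
        induction t using TensorProduct.induction_on with
        | zero => simp
        | tmul e f =>
          rw [hchi_tmul, hSBmul, LinearEquiv.apply_symm_apply]
          simp [muSB]
        | add s t hs ht => simp [map_add, hs, ht]
      rw [hmu, hn1, hSBone]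
    have main : ∀ t : ↥B ⊗[ℂ] ↥C,
        ((1 : A) ⊗ₜ[ℂ] b) * incl B B (TensorProduct.map LinearMap.id SB.symm.toLinearMap t) *
            (a ⊗ₜ[ℂ] (1 : A)) - a ⊗ₜ[ℂ] (b * ((chi t : ↥B) : A)) ∈
          Submodule.span ℂ {z : A ⊗[ℂ] A |
            ∃ (x : ↥B) (a' b' : A),
              z = ((x : A) * a') ⊗ₜ[ℂ] b' - a' ⊗ₜ[ℂ] (b' * (x : A))} := by
      intro t
      induction t using TensorProduct.induction_on with
      | zero => simp
      | tmul e f =>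
        apply Submodule.subset_span
        refine ⟨e, a, b * ((SB.symm f : ↥B) : A), ?_⟩
        rw [hchi_tmul]
        simp [incl, Algebra.TensorProduct.tmul_mul_tmul, mul_assoc]
      | add s t hs ht =>
        have hsum := Submodule.add_mem _ hs ht
        convert hsum using 1
        simp only [map_add, mul_add, add_mul, Subalgebra.coe_add, TensorProduct.tmul_add]
        abel
    have := main E
    rw [hchiE] at this
    simpa [F3] using this
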